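/- arXiv:2011.10458 — 3 statements merged into one kernel-verified Lean document; each statement's English description precedes it below -/
import Mathlib

section
/- Let ζ : Fin n → ℂ with ‖ζ(i)‖ = 1 for all i be a vertex switching function, let D(ζ) be the diagonal matrix with entries ζ(i), and let G^ζ be the complex unit hypergraph with incidence function ω^ζ(i, k) = ζ(i)⁻¹ · ω(i, k). Then B(G^ζ) = D(ζ)ᴴ B(G), A(G^ζ) = D(ζ)ᴴ A(G) D(ζ), K(G^ζ) = D(ζ)ᴴ K(G) D(ζ), and (when all degrees are positive) L(G^ζ) = D(ζ)ᴴ L(G) D(ζ). -/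
open Matrix

/-- Degree of vertex `i`: the number of edges `k` with `ω i k ≠ 0`. -/
noncomputable def deg {n m : ℕ} (ω : Fin n → Fin m → ℂ) (i : Fin n) : ℕ :=
  Nat.card {k : Fin m // ω i k ≠ 0}

/-- Incidence matrix of a complex unit hypergraph. -/
noncomputable def incM {n m : ℕ} (ω : Fin n → Fin m → ℂ) : Matrix (Fin n) (Fin m) ℂ :=
  Matrix.of ω

/-- Adjacency matrix. -/
noncomputable def adjM {n m : ℕ} (ω : Fin n → Fin m → ℂ) : Matrix (Fin n) (Fin n) ℂ :=
  Matrix.of fun i j => if i = j then 0 else -∑ k, ω i k * (starRingEnd ℂ) (ω j k)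

/-- Degree matrix. -/
noncomputable def degM {n m : ℕ} (ω : Fin n → Fin m → ℂ) : Matrix (Fin n) (Fin n) ℂ :=
  Matrix.diagonal fun i => (deg ω i : ℂ)

/-- Kirchhoff Laplacian `K = D - A`. -/
noncomputable def kirLap {n m : ℕ} (ω : Fin n → Fin m → ℂ) : Matrix (Fin n) (Fin n) ℂ :=
  degM ω - adjM ω

/-- Normalized Laplacian `L = D⁻¹ K`. -/
noncomputable def normLap {n m : ℕ} (ω : Fin n → Fin m → ℂ) : Matrix (Fin n) (Fin n) ℂ :=
  (degM ω)⁻¹ * kirLap ω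

/-- Effect of vertex switching `ω^ζ(i,k) = ζ(i)⁻¹ ω(i,k)` on the matrices:
`B(G^ζ) = D(ζ)ᴴ B(G)`, `A(G^ζ) = D(ζ)ᴴ A(G) D(ζ)`, `K(G^ζ) = D(ζ)ᴴ K(G) D(ζ)` and
(with all degrees positive) `L(G^ζ) = D(ζ)ᴴ L(G) D(ζ)`. -/
theorem stmt9 (n m : ℕ) (ω : Fin n → Fin m → ℂ)
    (hω : ∀ i k, ω i k = 0 ∨ ‖ω i k‖ = 1)
    (ζ : Fin n → ℂ) (hζ : ∀ i, ‖ζ i‖ = 1) :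
    incM (fun i k => (ζ i)⁻¹ * ω i k) = (Matrix.diagonal ζ)ᴴ * incM ω ∧
    adjM (fun i k => (ζ i)⁻¹ * ω i k) =
      (Matrix.diagonal ζ)ᴴ * adjM ω * Matrix.diagonal ζ ∧
    kirLap (fun i k => (ζ i)⁻¹ * ω i k) =
      (Matrix.diagonal ζ)ᴴ * kirLap ω * Matrix.diagonal ζ ∧
    ((∀ i, 0 < deg ω i) →
      normLap (fun i k => (ζ i)⁻¹ * ω i k) =
        (Matrix.diagonal ζ)ᴴ * normLap ω * Matrix.diagonal ζ) := by
  have hz0 : ∀ i, ζ i ≠ 0 := by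
    intro i h
    have := hζ i
    rw [h, norm_zero] at this
    exact one_ne_zero this.symm
  have hns : ∀ i, Complex.normSq (ζ i) = 1 := by
    intro i
    have : Complex.normSq (ζ i) = ‖ζ i‖ ^ 2 := by
      rw [Complex.normSq_eq_norm_sq]
    rw [this, hζ i]; norm_num
  have hinv : ∀ i, (ζ i)⁻¹ = (starRingEnd ℂ) (ζ i) := by
    intro i
    rw [Complex.inv_def, hns i]
    simp
  have hcz : ∀ i, star (ζ i) * ζ i = 1 := by
    intro i
    have h1 := (Complex.normSq_eq_conj_mul_self (z := ζ i)).symm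
    rw [hns i] at h1
    simpa using h1
  have hdeg : ∀ i, deg (fun i k => (ζ i)⁻¹ * ω i k) i = deg ω i := by
    intro i
    unfold deg
    apply Nat.card_congr
    apply Equiv.subtypeEquivRight
    intro k
    simp [mul_eq_zero, hz0 i]
  have hfun : (fun i => (deg (fun i k => (ζ i)⁻¹ * ω i k) i : ℂ)) =
      fun i => (deg ω i : ℂ) := by
    funext i; rw [hdeg i]
  have hdM : degM (fun i k => (ζ i)⁻¹ * ω i k) = degM ω := by
    unfold degM; rw [hfun]
  have hB : incM (fun i k => (ζ i)⁻¹ * ω i k) = (Matrix.diagonal ζ)ᴴ * incM ω := by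
    ext i k
    simp only [incM, Matrix.diagonal_conjTranspose, Matrix.diagonal_mul,
      Matrix.of_apply, Pi.star_apply, hinv i]
    rfl
  have hA : adjM (fun i k => (ζ i)⁻¹ * ω i k) =
      (Matrix.diagonal ζ)ᴴ * adjM ω * Matrix.diagonal ζ := by
    ext i j
    simp only [adjM, Matrix.diagonal_conjTranspose, Matrix.mul_diagonal,
      Matrix.diagonal_mul, Matrix.of_apply, Pi.star_apply]
    by_cases h : i = j
    · simp [h]
    · simp only [if_neg h, mul_neg, neg_mul, neg_inj, Finset.mul_sum, Finset.sum_mul]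
      apply Finset.sum_congr rfl
      intro k _
      rw [hinv i, hinv j]
      simp only [_root_.map_mul, Complex.conj_conj]
      have hstar : star (ζ i) = (starRingEnd ℂ) (ζ i) := rfl
      rw [hstar]
      ring
  have hDdeg : (Matrix.diagonal ζ)ᴴ * degM ω * Matrix.diagonal ζ = degM ω := by
    ext i j
    simp only [degM, Matrix.diagonal_conjTranspose, Matrix.mul_diagonal,
      Matrix.diagonal_mul, Pi.star_apply]
    by_cases h : i = j
    · subst h
      rw [Matrix.diagonal_apply_eq, Matrix.diagonal_apply_eq, mul_right_comm]
      simp only [Pi.star_apply]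
      rw [hcz i, one_mul]
    · simp [Matrix.diagonal_apply_ne _ h]
  have hK : kirLap (fun i k => (ζ i)⁻¹ * ω i k) =
      (Matrix.diagonal ζ)ᴴ * kirLap ω * Matrix.diagonal ζ := by
    unfold kirLap
    rw [hdM, hA, Matrix.mul_sub, Matrix.sub_mul, hDdeg]
  refine ⟨hB, hA, hK, ?_⟩
  intro hpos
  unfold normLap
  rw [hdM, hK]
  have hd0 : ∀ i, ((deg ω i : ℂ)) ≠ 0 := fun i => Nat.cast_ne_zero.mpr (hpos i).ne'
  have hinvD : (degM ω)⁻¹ = Matrix.diagonal (fun i => ((deg ω i : ℂ))⁻¹) := by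
    apply Matrix.inv_eq_right_inv
    rw [degM, Matrix.diagonal_mul_diagonal]
    rw [show (fun i => (deg ω i : ℂ) * ((deg ω i : ℂ))⁻¹) = fun _ => (1 : ℂ)
      from funext fun i => mul_inv_cancel₀ (hd0 i)]
    exact Matrix.diagonal_one
  have hcomm : (degM ω)⁻¹ * (Matrix.diagonal ζ)ᴴ = (Matrix.diagonal ζ)ᴴ * (degM ω)⁻¹ := by
    rw [hinvD, Matrix.diagonal_conjTranspose, Matrix.diagonal_mul_diagonal,
      Matrix.diagonal_mul_diagonal]
    rw [show (fun i => ((deg ω i : ℂ))⁻¹ * (star ζ) i) = fun i => (star ζ) i * ((deg ω i : ℂ))⁻¹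
      from funext fun i => mul_comm _ _]
  rw [← Matrix.mul_assoc, ← Matrix.mul_assoc, hcomm, Matrix.mul_assoc (Matrix.diagonal ζ)ᴴ]
end

section
/- Let ξ : Fin m → ℂ with ‖ξ(k)‖ = 1 for all k be an edge switching function, and let G^ξ be the complex unit hypergraph with incidence function ω^ξ(i, k) = ξ(k)⁻¹ · ω(i, k). Then B(G^ξ) = B(G) · diag(ξ(k)⁻¹), while the adjacency matrix, Kirchhoff Laplacian and (when all degrees are positive) normalized Laplacian are unchanged: A(G^ξ) = A(G), K(G^ξ) = K(G), L(G^ξ) = L(G). -/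
open Matrix

/-- Effect of edge switching `ω^ξ(i,k) = ξ(k)⁻¹ ω(i,k)`:
`B(G^ξ) = B(G) · diag(ξ(k)⁻¹)` while `A`, `K` and (when all degrees are positive) `L`
are unchanged. -/
theorem stmt10 (n m : ℕ) (ω : Fin n → Fin m → ℂ)
    (hω : ∀ i k, ω i k = 0 ∨ ‖ω i k‖ = 1)
    (ξ : Fin m → ℂ) (hξ : ∀ k, ‖ξ k‖ = 1) :
    incM (fun i k => (ξ k)⁻¹ * ω i k) =
      incM ω * Matrix.diagonal (fun k => (ξ k)⁻¹) ∧
    adjM (fun i k => (ξ k)⁻¹ * ω i k) = adjM ω ∧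
    kirLap (fun i k => (ξ k)⁻¹ * ω i k) = kirLap ω ∧
    ((∀ i, 0 < deg ω i) → normLap (fun i k => (ξ k)⁻¹ * ω i k) = normLap ω) := by
  have hξ0 : ∀ k, ξ k ≠ 0 := fun k h => by
    have := hξ k; rw [h] at this; simp at this
  have hunit : ∀ k, (ξ k)⁻¹ * (starRingEnd ℂ) (ξ k)⁻¹ = 1 := by
    intro k
    rw [map_inv₀, ← mul_inv, Complex.mul_conj, Complex.normSq_eq_norm_sq,
      hξ k]
    norm_num
  have hdeg : deg (fun i k => (ξ k)⁻¹ * ω i k) = deg ω := by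
    funext i
    have hp : (fun k => (ξ k)⁻¹ * ω i k ≠ 0) = fun k => ω i k ≠ 0 := by
      funext k
      simp [mul_ne_zero_iff, inv_ne_zero (hξ0 k)]
    exact congrArg (fun p : Fin m → Prop => Nat.card (Subtype p)) hp
  have hadj : adjM (fun i k => (ξ k)⁻¹ * ω i k) = adjM ω := by
    ext i j
    simp only [adjM, Matrix.of_apply]
    split
    · rfl
    · congr 1
      apply Finset.sum_congr rfl
      intro k _
      rw [_root_.map_mul, show ∀ a b c d : ℂ, a * b * (c * d) = a * c * (b * d) from
        fun a b c d => by ring, hunit, one_mul]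
  have hinc : incM (fun i k => (ξ k)⁻¹ * ω i k) =
      incM ω * Matrix.diagonal (fun k => (ξ k)⁻¹) := by
    ext i k
    simp [incM, Matrix.mul_apply, Matrix.diagonal, mul_comm]
  have hkir : kirLap (fun i k => (ξ k)⁻¹ * ω i k) = kirLap ω := by
    unfold kirLap degM
    rw [hadj, hdeg]
  refine ⟨hinc, hadj, hkir, fun _ => ?_⟩
  unfold normLap degM
  rw [hkir, hdeg]
end

section
/- For any vertex switching function ζ : Fin n → ℂ with ‖ζ(i)‖ = 1 for all i, the complex unit hypergraphs G and G^ζ (with incidence function ω^ζ(i,k) = ζ(i)⁻¹ ω(i,k)) are cospectral with respect to A, K, K*, L and L*: each of these matrices for G^ζ has the same characteristic polynomial (hence the same eigenvalues with multiplicity) as the corresponding matrix for G. -/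
open Matrix

/-- Dual Kirchhoff Laplacian `K* = Bᴴ B`. -/
noncomputable def dualKirLap {n m : ℕ} (ω : Fin n → Fin m → ℂ) :
    Matrix (Fin m) (Fin m) ℂ :=
  (incM ω)ᴴ * incM ω

/-- Dual normalized Laplacian `L* = Bᴴ D⁻¹ B`. -/
noncomputable def dualNormLap {n m : ℕ} (ω : Fin n → Fin m → ℂ) :
    Matrix (Fin m) (Fin m) ℂ :=
  (incM ω)ᴴ * (degM ω)⁻¹ * incM ω


open Polynomial in

lemma charpoly_conj_aux {N : ℕ} (M P Q : Matrix (Fin N) (Fin N) ℂ)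
    (h : P * Q = 1) : (P * M * Q).charpoly = M.charpoly := by
  have hQP : Q * P = 1 := by
    have := mul_eq_one_comm.mp h
    exact this
  have key : charmatrix (P * M * Q) =
      P.map C * charmatrix M * Q.map C := by
    unfold charmatrix
    have h1 : P.map C * Q.map C = 1 := by
      rw [← Matrix.map_mul, h, Matrix.map_one _ (map_zero C) (map_one C)]
    rw [Matrix.mul_sub, Matrix.sub_mul]
    congr 1
    · have hc := Matrix.scalar_commute (X : Polynomial ℂ) (fun r => Commute.all _ _) (P.map C)
      rw [← hc, Matrix.mul_assoc, h1, Matrix.mul_one]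
    · simp [RingHom.mapMatrix_apply, Matrix.map_mul]
  rw [Matrix.charpoly, key, Matrix.det_mul, Matrix.det_mul, Matrix.charpoly]
  have : (P.map C).det * (Q.map C).det = 1 := by
    rw [← Matrix.det_mul, ← Matrix.map_mul, h, Matrix.map_one _ (map_zero C) (map_one C), Matrix.det_one]
  ring_nf
  ring_nf at this
  calc (P.map C).det * M.charmatrix.det * (Q.map C).det
      = M.charmatrix.det * ((P.map C).det * (Q.map C).det) := by ring
    _ = M.charmatrix.det := by rw [this]; ring

section Main
open Polynomial

/-- `G` and `G^ζ` are cospectral with respect to `A`, `K`, `K*`, `L` and `L*`: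
the characteristic polynomials agree. -/
theorem stmt11 (n m : ℕ) (ω : Fin n → Fin m → ℂ)
    (hω : ∀ i k, ω i k = 0 ∨ ‖ω i k‖ = 1)
    (ζ : Fin n → ℂ) (hζ : ∀ i, ‖ζ i‖ = 1) :
    (adjM (fun i k => (ζ i)⁻¹ * ω i k)).charpoly = (adjM ω).charpoly ∧
    (kirLap (fun i k => (ζ i)⁻¹ * ω i k)).charpoly = (kirLap ω).charpoly ∧
    (dualKirLap (fun i k => (ζ i)⁻¹ * ω i k)).charpoly = (dualKirLap ω).charpoly ∧
    ((∀ i, 0 < deg ω i) →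
      (normLap (fun i k => (ζ i)⁻¹ * ω i k)).charpoly = (normLap ω).charpoly ∧
      (dualNormLap (fun i k => (ζ i)⁻¹ * ω i k)).charpoly = (dualNormLap ω).charpoly) := by
  set ω' : Fin n → Fin m → ℂ := fun i k => (ζ i)⁻¹ * ω i k with hω'
  have hζ0 : ∀ i, ζ i ≠ 0 := fun i => by
    intro h; have := hζ i; rw [h] at this; simp at this
  have hconj : ∀ i, (starRingEnd ℂ) (ζ i) = (ζ i)⁻¹ := fun i => by
    rw [Complex.inv_def]
    have h1 : Complex.normSq (ζ i) = 1 := by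
      have := hζ i
      rw [Complex.normSq_eq_norm_sq, this, one_pow]
    rw [h1]; simp
  have hconjinv : ∀ i, (starRingEnd ℂ) ((ζ i)⁻¹) = ζ i := fun i => by
    rw [map_inv₀, hconj, inv_inv]
  set Z : Matrix (Fin n) (Fin n) ℂ := Matrix.diagonal ζ with hZ
  set Zi : Matrix (Fin n) (Fin n) ℂ := Matrix.diagonal (fun i => (ζ i)⁻¹) with hZi
  have hZZi : Z * Zi = 1 := by
    rw [hZ, hZi, Matrix.diagonal_mul_diagonal]
    convert Matrix.diagonal_one
    exact mul_inv_cancel₀ (hζ0 _)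
  have hZiZ : Zi * Z = 1 := mul_eq_one_comm.mp hZZi
  -- degrees unchanged
  have hdeg : ∀ i, deg ω' i = deg ω i := fun i => by
    unfold deg
    apply Nat.card_congr
    apply Equiv.subtypeEquivRight
    intro k
    simp [hω', mul_ne_zero_iff, inv_ne_zero (hζ0 i)]
  have hdegM : degM ω' = degM ω := by
    unfold degM
    exact congrArg Matrix.diagonal (funext fun i => by rw [hdeg])
  -- adjacency conjugation
  have hadj : adjM ω' = Zi * adjM ω * Z := by
    rw [Matrix.mul_assoc]
    ext i j
    rw [hZi, hZ, Matrix.diagonal_mul, Matrix.mul_diagonal]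
    by_cases hij : i = j
    · subst hij; simp [adjM]
    · simp only [adjM, Matrix.of_apply, if_neg hij, hω']
      rw [neg_mul, mul_neg, neg_inj, Finset.sum_mul, Finset.mul_sum]
      apply Finset.sum_congr rfl
      intro k _
      rw [_root_.map_mul, hconjinv]
      ring
  have hA : (adjM ω').charpoly = (adjM ω).charpoly := by
    rw [hadj]; exact charpoly_conj_aux _ _ _ hZiZ
  -- D = Zi * D * Z
  have hDconj : ∀ v : Fin n → ℂ,
      Zi * Matrix.diagonal v * Z = Matrix.diagonal v := by
    intro v
    rw [hZ, hZi, Matrix.diagonal_mul_diagonal, Matrix.diagonal_mul_diagonal]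
    refine congrArg Matrix.diagonal (funext fun i => ?_)
    rw [mul_comm ((ζ i)⁻¹) (v i), mul_assoc, inv_mul_cancel₀ (hζ0 i), mul_one]
  have hK : kirLap ω' = Zi * kirLap ω * Z := by
    unfold kirLap
    rw [hdegM, hadj, Matrix.mul_sub, Matrix.sub_mul]
    congr 1
    exact (hDconj _).symm
  have hKc : (kirLap ω').charpoly = (kirLap ω).charpoly := by
    rw [hK]; exact charpoly_conj_aux _ _ _ hZiZ
  -- incidence
  have hB : incM ω' = Zi * incM ω := by
    ext i k
    simp [incM, hZi, Matrix.diagonal_mul, hω']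
  have hBH : (incM ω')ᴴ = (incM ω)ᴴ * Z := by
    rw [hB, Matrix.conjTranspose_mul, hZi, Matrix.diagonal_conjTranspose]
    congr 1
    rw [hZ]
    refine congrArg Matrix.diagonal (funext fun i => ?_)
    simpa using hconjinv i
  have hKd : dualKirLap ω' = dualKirLap ω := by
    unfold dualKirLap
    rw [hBH, hB, Matrix.mul_assoc, ← Matrix.mul_assoc Z, hZZi, Matrix.one_mul]
  have hDinv : Z * (degM ω)⁻¹ * Zi = (degM ω)⁻¹ := by
    unfold degM
    rw [Matrix.inv_diagonal, hZ, hZi, Matrix.diagonal_mul_diagonal,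
      Matrix.diagonal_mul_diagonal]
    refine congrArg Matrix.diagonal (funext fun i => ?_)
    rw [mul_comm (ζ i), mul_assoc, mul_inv_cancel₀ (hζ0 i), mul_one]
  -- normalized Laplacians
  refine ⟨hA, hKc, by rw [hKd], fun _ => ⟨?_, ?_⟩⟩
  · have key : normLap ω' = Zi * normLap ω * Z := by
      unfold normLap
      rw [hdegM, hK]
      have hDZi : (degM ω)⁻¹ * Zi = Zi * (degM ω)⁻¹ := by
        unfold degM
        rw [Matrix.inv_diagonal, hZi, Matrix.diagonal_mul_diagonal,
          Matrix.diagonal_mul_diagonal]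
        exact congrArg Matrix.diagonal (funext fun i => mul_comm _ _)
      rw [← Matrix.mul_assoc, ← Matrix.mul_assoc, hDZi, Matrix.mul_assoc Zi]
    rw [key]; exact charpoly_conj_aux _ _ _ hZiZ
  · have key : dualNormLap ω' = dualNormLap ω := by
      unfold dualNormLap
      rw [hBH, hB, hdegM]
      calc (incM ω)ᴴ * Z * (degM ω)⁻¹ * (Zi * incM ω)
          = (incM ω)ᴴ * (Z * (degM ω)⁻¹ * Zi) * incM ω := by
            simp only [Matrix.mul_assoc]
        _ = (incM ω)ᴴ * (degM ω)⁻¹ * incM ω := by rw [hDinv]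
    rw [key]
end Main
end
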